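/- arXiv:2112.02900 — 2 statements merged into one kernel-verified Lean document; each statement's English description precedes it below -/
import Mathlib

section
/- Balanced dynamics on the dual projective plane (Lemma 2.12, diagonal case): Let a_n = diag(1, β_n, γ_n) ∈ GL(3,ℝ) with 0 < γ_n ≤ β_n ≤ 1 for all n, β_n → 0 and γ_n/β_n → 0, acting on the dual projective plane ℝP²*. Then: (1) for every [f] = [f₁:f₂:f₃]* with f₃ ≠ 0, D_{(a_n)}([f]) = {[0:0:1]*}; (2) for every [f] with f₃ = 0 and [f] ≠ [1:0:0]*, D_{(a_n)}([f]) = {[g₁:g₂:g₃]* : g₁ = 0} (the set of classes of forms vanishing at e₁); (3) D_{(a_n)}([1:0:0]*) = ℝP²*. -/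
open Matrix Filter Topology Set

noncomputable section

/-- `V3` is `ℝ³`. -/
abbrev V3 : Type := Fin 3 → ℝ

/-- The group `GL(3,ℝ)` of invertible `3 × 3` real matrices. -/
abbrev GL3 : Type := (Matrix (Fin 3) (Fin 3) ℝ)ˣ

/-- Nonzero vectors of `ℝ³` up to a nonzero scalar. -/
def projSetoid : Setoid {v : V3 // v ≠ 0} where
  r v w := ∃ c : ℝ, c ≠ 0 ∧ w.1 = c • v.1
  iseqv := by
    refine ⟨fun v => ⟨1, one_ne_zero, (one_smul ℝ v.1).symm⟩, ?_, ?_⟩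
    · rintro v w ⟨c, hc, h⟩
      exact ⟨c⁻¹, inv_ne_zero hc, by rw [h, smul_smul, inv_mul_cancel₀ hc, one_smul]⟩
    · rintro u v w ⟨c, hc, h⟩ ⟨d, hd, h'⟩
      exact ⟨d * c, mul_ne_zero hd hc, by rw [h', h, smul_smul]⟩

/-- The real projective plane `ℝP²`, as the quotient of `ℝ³ \ {0}` by nonzero scalings,
with the quotient topology.  (We use the same model for the dual projective plane `ℝP²*`,
a class `[f₁ : f₂ : f₃]*` of linear forms being recorded through its coefficient
vector `(f₁, f₂, f₃)`; the form acts on vectors by the dot product.) -/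
def RP2 : Type := Quotient projSetoid

/-- The projective class `[v]` of a nonzero vector. -/
def RP2.mk (v : V3) (hv : v ≠ 0) : RP2 := Quotient.mk projSetoid ⟨v, hv⟩

instance : TopologicalSpace RP2 :=
  inferInstanceAs (TopologicalSpace (Quotient projSetoid))

lemma RP2.ind {P : RP2 → Prop} (h : ∀ (v : V3) (hv : v ≠ 0), P (RP2.mk v hv)) (p : RP2) : P p := by
  refine Quotient.ind (fun a => ?_) p
  exact h a.1 a.2

lemma RP2.mk_eq_mk_iff {v w : V3} {hv : v ≠ 0} {hw : w ≠ 0} :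
    RP2.mk v hv = RP2.mk w hw ↔ ∃ c : ℝ, c ≠ 0 ∧ w = c • v :=
  ⟨fun h => Quotient.exact h, fun h => Quotient.sound h⟩

lemma ne_zero_of_coord {v : V3} (i : Fin 3) (h : v i ≠ 0) : v ≠ 0 :=
  fun h0 => h (by rw [h0]; rfl)

/-- The projective class of a vector, defaulting to `[e₁]` for the zero vector. -/
def RP2.mk' (v : V3) : RP2 :=
  if h : v = 0 then RP2.mk ![1, 0, 0] (ne_zero_of_coord 0 (by simp)) else RP2.mk v h

lemma e1_ne : (![1, 0, 0] : V3) ≠ 0 := ne_zero_of_coord 0 (by norm_num)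

lemma e3_ne : (![0, 0, 1] : V3) ≠ 0 := ne_zero_of_coord 2 (by simp)

lemma GL3.mulVec_ne {g : GL3} {v : V3} (hv : v ≠ 0) :
    (g : Matrix (Fin 3) (Fin 3) ℝ) *ᵥ v ≠ 0 := by
  intro h
  apply hv
  have h2 : ((g⁻¹ : GL3) : Matrix (Fin 3) (Fin 3) ℝ) *ᵥ
      ((g : Matrix (Fin 3) (Fin 3) ℝ) *ᵥ v) = 0 := by rw [h, Matrix.mulVec_zero]
  rwa [Matrix.mulVec_mulVec, Units.inv_mul, Matrix.one_mulVec] at h2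

/-- The action of `g ∈ GL(3,ℝ)` on `ℝP²`, `g · [v] = [g v]`. -/
def RP2.mapMat (g : GL3) : RP2 → RP2 :=
  Quotient.lift
    (fun a : {v : V3 // v ≠ 0} =>
      RP2.mk ((g : Matrix (Fin 3) (Fin 3) ℝ) *ᵥ a.1) (GL3.mulVec_ne a.2))
    (by
      rintro a b ⟨c, hc, h⟩
      apply Quotient.sound
      refine ⟨c, hc, ?_⟩
      show (g : Matrix (Fin 3) (Fin 3) ℝ) *ᵥ b.1 = c • ((g : Matrix (Fin 3) (Fin 3) ℝ) *ᵥ a.1)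
      rw [h, Matrix.mulVec_smul])

lemma RP2.mapMat_mk (g : GL3) (v : V3) (hv : v ≠ 0) :
    RP2.mapMat g (RP2.mk v hv) =
      RP2.mk ((g : Matrix (Fin 3) (Fin 3) ℝ) *ᵥ v) (GL3.mulVec_ne hv) := rfl

/-- The element of `GL(3,ℝ)` acting on coefficient vectors of linear forms the way `g`
acts on `ℝP²*`:  the coefficient vector of `f ∘ g⁻¹` is `(g⁻¹)ᵀ` applied to that of `f`. -/
def dualGL (g : GL3) : GL3 where
  val := ((g⁻¹ : GL3) : Matrix (Fin 3) (Fin 3) ℝ)ᵀ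
  inv := ((g : GL3) : Matrix (Fin 3) (Fin 3) ℝ)ᵀ
  val_inv := by rw [← Matrix.transpose_mul, Units.mul_inv, Matrix.transpose_one]
  inv_val := by rw [← Matrix.transpose_mul, Units.inv_mul, Matrix.transpose_one]

/-- The flag space `X`: pairs `([v], [f]) ∈ ℝP² × ℝP²*` with `f(v) = 0`. -/
def FlagSpace : Set (RP2 × RP2) :=
  {x | ∀ (v f : V3) (hv : v ≠ 0) (hf : f ≠ 0),
    x.1 = RP2.mk v hv → x.2 = RP2.mk f hf → f ⬝ᵥ v = 0}

/-- Points of the flag space. -/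
abbrev Flag3 : Type := ↥FlagSpace

lemma mem_flagSpace_mk {v f : V3} (hv : v ≠ 0) (hf : f ≠ 0) (h : f ⬝ᵥ v = 0) :
    (RP2.mk v hv, RP2.mk f hf) ∈ FlagSpace := by
  rintro v' f' hv' hf' hp hq
  obtain ⟨c, hc, hcv⟩ := RP2.mk_eq_mk_iff.1 hp
  obtain ⟨d, hd, hdf⟩ := RP2.mk_eq_mk_iff.1 hq
  rw [hcv, hdf, smul_dotProduct, dotProduct_smul, h]
  simp

lemma dot_invariance (g : GL3) (v f : V3) :
    (((dualGL g : GL3) : Matrix (Fin 3) (Fin 3) ℝ) *ᵥ f) ⬝ᵥ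
      ((g : Matrix (Fin 3) (Fin 3) ℝ) *ᵥ v) = f ⬝ᵥ v := by
  have h1 : ((dualGL g : GL3) : Matrix (Fin 3) (Fin 3) ℝ) *ᵥ f =
      f ᵥ* ((g⁻¹ : GL3) : Matrix (Fin 3) (Fin 3) ℝ) := Matrix.mulVec_transpose _ _
  rw [h1, Matrix.dotProduct_mulVec, Matrix.vecMul_vecMul, Units.inv_mul, Matrix.vecMul_one]

lemma flagPair_mem (g : GL3) {x : RP2 × RP2} (hx : x ∈ FlagSpace) :
    (RP2.mapMat g x.1, RP2.mapMat (dualGL g) x.2) ∈ FlagSpace := by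
  obtain ⟨p, q⟩ := x
  revert hx
  refine Quotient.inductionOn₂ p q ?_
  rintro ⟨v, hv⟩ ⟨f, hf⟩ hx
  have h0 : f ⬝ᵥ v = 0 := hx v f hv hf rfl rfl
  exact mem_flagSpace_mk _ _ (by rw [dot_invariance]; exact h0)

/-- The action of `g ∈ GL(3,ℝ)` on the flag space,
`g · ([v], [f]) = ([g v], [f ∘ g⁻¹])`. -/
def flagMap (g : GL3) (x : Flag3) : Flag3 :=
  ⟨(RP2.mapMat g x.1.1, RP2.mapMat (dualGL g) x.1.2), flagPair_mem g x.2⟩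

/-! ### Composition laws and continuity -/

lemma RP2.mapMat_mapMat (g h : GL3) (p : RP2) :
    RP2.mapMat g (RP2.mapMat h p) = RP2.mapMat (g * h) p := by
  refine Quotient.inductionOn p fun a => ?_
  apply Quotient.sound
  exact ⟨1, one_ne_zero, by simp [Matrix.mulVec_mulVec, Units.val_mul]⟩

lemma RP2.mapMat_one (p : RP2) : RP2.mapMat 1 p = p := by
  refine Quotient.inductionOn p fun a => ?_
  apply Quotient.sound
  exact ⟨1, one_ne_zero, by simp [Matrix.one_mulVec, Units.val_one]⟩

lemma dualGL_mul (g h : GL3) : dualGL (g * h) = dualGL g * dualGL h := by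
  apply Units.ext
  rw [Units.val_mul]
  show (((g * h)⁻¹ : GL3) : Matrix (Fin 3) (Fin 3) ℝ)ᵀ =
    ((g⁻¹ : GL3) : Matrix (Fin 3) (Fin 3) ℝ)ᵀ * ((h⁻¹ : GL3) : Matrix (Fin 3) (Fin 3) ℝ)ᵀ
  rw [_root_.mul_inv_rev, Units.val_mul, Matrix.transpose_mul]

lemma dualGL_one : dualGL (1 : GL3) = 1 := by
  apply Units.ext
  show (((1 : GL3)⁻¹ : GL3) : Matrix (Fin 3) (Fin 3) ℝ)ᵀ = ((1 : GL3) : Matrix (Fin 3) (Fin 3) ℝ)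
  rw [inv_one, Units.val_one, Matrix.transpose_one]

lemma flagMap_flagMap (g h : GL3) (x : Flag3) :
    flagMap g (flagMap h x) = flagMap (g * h) x := by
  apply Subtype.ext
  apply Prod.ext
  · exact RP2.mapMat_mapMat g h x.1.1
  · show RP2.mapMat (dualGL g) (RP2.mapMat (dualGL h) x.1.2) = RP2.mapMat (dualGL (g * h)) x.1.2
    rw [RP2.mapMat_mapMat, dualGL_mul]

lemma flagMap_one (x : Flag3) : flagMap 1 x = x := by
  apply Subtype.ext
  apply Prod.ext
  · exact RP2.mapMat_one x.1.1
  · show RP2.mapMat (dualGL 1) x.1.2 = x.1.2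
    rw [dualGL_one, RP2.mapMat_one]

lemma continuous_mulVec (M : Matrix (Fin 3) (Fin 3) ℝ) :
    Continuous fun v : V3 => M *ᵥ v := by
  have h : (fun v : V3 => M *ᵥ v) = fun v => fun i => ∑ j, M i j * v j := by
    funext v i
    simp [Matrix.mulVec, dotProduct]
  rw [h]
  exact continuous_pi fun i =>
    continuous_finset_sum _ fun j _ => continuous_const.mul (continuous_apply j)

lemma continuous_mapMat (g : GL3) : Continuous (RP2.mapMat g) := by
  apply Continuous.quotient_lift
  exact continuous_quotient_mk'.comp
    (Continuous.subtype_mk ((continuous_mulVec _).comp continuous_subtype_val) _)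

lemma continuous_flagMap (g : GL3) : Continuous (flagMap g) := by
  apply Continuous.subtype_mk
  exact ((continuous_mapMat g).comp (continuous_fst.comp continuous_subtype_val)).prodMk
    ((continuous_mapMat (dualGL g)).comp (continuous_snd.comp continuous_subtype_val))

/-- The action of `g ∈ GL(3,ℝ)` on the flag space, as a homeomorphism. -/
def flagHomeo (g : GL3) : Flag3 ≃ₜ Flag3 where
  toFun := flagMap g
  invFun := flagMap g⁻¹
  left_inv := fun x => by rw [flagMap_flagMap, inv_mul_cancel, flagMap_one]
  right_inv := fun x => by rw [flagMap_flagMap, mul_inv_cancel, flagMap_one]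
  continuous_toFun := continuous_flagMap g
  continuous_invFun := continuous_flagMap g⁻¹

/-- The group of homeomorphisms of a topological space
(with `(f * g) x = f (g x)`). -/
instance homeoGroup (Z : Type*) [TopologicalSpace Z] : Group (Z ≃ₜ Z) where
  mul f g := g.trans f
  one := Homeomorph.refl Z
  inv := Homeomorph.symm
  mul_assoc _ _ _ := Homeomorph.ext fun _ => rfl
  one_mul _ := Homeomorph.ext fun _ => rfl
  mul_one _ := Homeomorph.ext fun _ => rfl
  inv_mul_cancel f := Homeomorph.ext fun x => f.symm_apply_apply x

/-! ### Geometric objects in the flag space -/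

/-- The α-circle of a point `p ∈ ℝP²`: all flags whose point is `p`. -/
def Cα (p : RP2) : Set Flag3 := {x | x.1.1 = p}

/-- The β-circle of the projective line with defining form (class) `q`:
all flags whose plane is `ker q`. -/
def Cβ (q : RP2) : Set Flag3 := {x | x.1.2 = q}

/-- The plane of the flag `x` contains the direction of the vector `u`. -/
def planeContains (x : Flag3) (u : V3) : Prop :=
  ∀ (f : V3) (hf : f ≠ 0), x.1.2 = RP2.mk f hf → f ⬝ᵥ u = 0

/-- The point of the flag `x` lies on the projective line defined by the linear
form of coefficients `w`. -/
def pointOnForm (x : Flag3) (w : V3) : Prop :=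
  ∀ (v : V3) (hv : v ≠ 0), x.1.1 = RP2.mk v hv → w ⬝ᵥ v = 0

/-- The β-circle of the projective line spanned by the (independent) directions of
`u` and `w`: all flags whose plane contains both. -/
def CβSpan (u w : V3) : Set Flag3 := {x | planeContains x u ∧ planeContains x w}

lemma li_ne_zero_0 {v1 v2 v3 : V3} (h : LinearIndependent ℝ ![v1, v2, v3]) : v1 ≠ 0 := by
  have := h.ne_zero 0; simpa using this

lemma li_ne_zero_1 {v1 v2 v3 : V3} (h : LinearIndependent ℝ ![v1, v2, v3]) : v2 ≠ 0 := by
  have := h.ne_zero 1; simpa using this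

lemma li_ne_zero_2 {v1 v2 v3 : V3} (h : LinearIndependent ℝ ![v1, v2, v3]) : v3 ≠ 0 := by
  have := h.ne_zero 2; simpa using this

/-- The repulsive bouquet of circles `B⁻(g) = C_α([v₃]) ∪ C_β(span(v₂,v₃))` of a
loxodromic element with eigenvectors `v₁, v₂, v₃` (eigenvalues in decreasing order
of modulus). -/
def bouquetMinus (v2 v3 : V3) (h3 : v3 ≠ 0) : Set Flag3 :=
  Cα (RP2.mk v3 h3) ∪ CβSpan v2 v3

/-- The attractive bouquet of circles `B⁺(g) = C_α([v₁]) ∪ C_β(span(v₁,v₂))`. -/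
def bouquetPlus (v1 v2 : V3) (h1 : v1 ≠ 0) : Set Flag3 :=
  Cα (RP2.mk v1 h1) ∪ CβSpan v1 v2

/-- The dynamic set of a point `x` under a sequence of maps `g n`: all limits of
`g (n k) (x k)` for a strictly increasing sequence `(n k)` and a sequence `x k → x`. -/
def DynSet {M : Type*} [TopologicalSpace M] (g : ℕ → M → M) (x : M) : Set M :=
  {y | ∃ φ : ℕ → ℕ, StrictMono φ ∧ ∃ u : ℕ → M,
    Tendsto u atTop (𝓝 x) ∧ Tendsto (fun k => g (φ k) (u k)) atTop (𝓝 y)}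

end


noncomputable section AuxLemmas

lemma sumSq_pos {v : V3} (hv : v ≠ 0) : 0 < ∑ l, v l * v l := by
  obtain ⟨i, hi⟩ : ∃ i, v i ≠ 0 := by simpa [Function.ne_iff] using hv
  exact Finset.sum_pos' (fun j _ => mul_self_nonneg _)
    ⟨i, Finset.mem_univ i, mul_self_pos.2 hi⟩

lemma RP2.mk_eq_of_eq {v w : V3} (h : v = w) (hv : v ≠ 0) (hw : w ≠ 0) :
    RP2.mk v hv = RP2.mk w hw := by subst h; rfl

/-- The Veronese-type map on representatives. -/
def verAux (a : {v : V3 // v ≠ 0}) : Fin 3 → Fin 3 → ℝ :=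
  fun i j => a.1 i * a.1 j / ∑ l, a.1 l * a.1 l

lemma verAux_resp : ∀ a b : {v : V3 // v ≠ 0}, projSetoid.r a b → verAux a = verAux b := by
  rintro a b ⟨c, hc, h⟩
  have hS : (∑ l, a.1 l * a.1 l) ≠ 0 := (sumSq_pos a.2).ne'
  funext i j
  simp only [verAux, h, Pi.smul_apply, smul_eq_mul]
  have hsum : ∑ l, (c * a.1 l) * (c * a.1 l) = c ^ 2 * ∑ l, a.1 l * a.1 l := by
    rw [Finset.mul_sum]
    exact Finset.sum_congr rfl (fun l _ => by ring)
  rw [hsum]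
  field_simp

/-- The Veronese-type map on `ℝP²`. -/
def RP2.ver : RP2 → (Fin 3 → Fin 3 → ℝ) := Quotient.lift verAux verAux_resp

lemma continuous_verAux : Continuous verAux := by
  refine continuous_pi fun i => continuous_pi fun j => Continuous.div ?_ ?_ ?_
  · exact (((continuous_apply i).comp continuous_subtype_val).mul
      ((continuous_apply j).comp continuous_subtype_val))
  · exact continuous_finset_sum _ fun l _ =>
      ((continuous_apply l).comp continuous_subtype_val).mul
        ((continuous_apply l).comp continuous_subtype_val)
  · exact fun a => (sumSq_pos a.2).ne'

lemma continuous_rp2ver : Continuous RP2.ver := continuous_verAux.quotient_lift _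

lemma rp2ver_injective : Function.Injective RP2.ver := by
  intro p q
  refine Quotient.inductionOn₂ p q ?_
  rintro ⟨v, hv⟩ ⟨w, hw⟩ h
  have key : ∀ i j : Fin 3,
      v i * v j / (∑ l, v l * v l) = w i * w j / (∑ l, w l * w l) :=
    fun i j => congrFun (congrFun h i) j
  have hSv : (∑ l, v l * v l) ≠ 0 := (sumSq_pos hv).ne'
  have hSw : (∑ l, w l * w l) ≠ 0 := (sumSq_pos hw).ne'
  obtain ⟨i, hi⟩ : ∃ i, v i ≠ 0 := by simpa [Function.ne_iff] using hv
  have E2 : v i * v i * (∑ l, w l * w l) = w i * w i * (∑ l, v l * v l) :=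
    (div_eq_div_iff hSv hSw).1 (key i i)
  have hwi : w i ≠ 0 := by
    intro h0
    apply mul_ne_zero (mul_ne_zero hi hi) hSw
    rw [E2, h0]; ring
  apply Quotient.sound
  refine ⟨w i / v i, div_ne_zero hwi hi, ?_⟩
  funext j
  have E1 : v i * v j * (∑ l, w l * w l) = w i * w j * (∑ l, v l * v l) :=
    (div_eq_div_iff hSv hSw).1 (key i j)
  have h3 : (w i * (∑ l, v l * v l)) * (w i * v j) =
      (w i * (∑ l, v l * v l)) * (v i * w j) := by
    linear_combination v i * E1 - v j * E2
  have h4 := mul_left_cancel₀ (mul_ne_zero hwi hSv) h3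
  show w j = (w i / v i) * v j
  rw [div_mul_eq_mul_div, eq_div_iff hi]
  linear_combination -h4

instance : T2Space RP2 := T2Space.of_injective_continuous rp2ver_injective continuous_rp2ver

lemma continuous_rp2mkq : Continuous (Quotient.mk projSetoid) := continuous_quot_mk

lemma tendsto_mk {b : ℕ → V3} {L : V3} (hb : ∀ k, b k ≠ 0) (hL : L ≠ 0)
    (h : Tendsto b atTop (𝓝 L)) :
    Tendsto (fun k => RP2.mk (b k) (hb k)) atTop (𝓝 (RP2.mk L hL)) := by
  have h1 : Tendsto (fun k => (⟨b k, hb k⟩ : {v : V3 // v ≠ 0})) atTop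
      (𝓝 (⟨L, hL⟩ : {v : V3 // v ≠ 0})) := tendsto_subtype_rng.2 h
  exact (continuous_rp2mkq.tendsto _).comp h1

/-- Lifting of converging sequences in `ℝP²`, along a subsequence. -/
lemma exists_lift {u : ℕ → RP2} {f : V3} {hf : f ≠ 0}
    (hu : Tendsto u atTop (𝓝 (RP2.mk f hf))) :
    ∃ ψ : ℕ → ℕ, StrictMono ψ ∧ ∃ v : ℕ → {x : V3 // x ≠ 0},
      (∀ k, RP2.mk (v k).1 (v k).2 = u (ψ k)) ∧
      Tendsto (fun k => (v k).1) atTop (𝓝 f) := by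
  have hrep : ∀ k, ∃ a : {v : V3 // v ≠ 0}, Quotient.mk projSetoid a = u k :=
    fun k => Quotient.exists_rep (u k)
  choose a ha using hrep
  have hnorm : ∀ k, ‖(a k).1‖ ≠ 0 := fun k => norm_ne_zero_iff.2 (a k).2
  set w : ℕ → V3 := fun k => ‖(a k).1‖⁻¹ • (a k).1 with hwdef
  have hwmem : ∀ k, w k ∈ Metric.sphere (0 : V3) 1 := by
    intro k
    rw [mem_sphere_zero_iff_norm, hwdef]
    rw [norm_smul, norm_inv, norm_norm, inv_mul_cancel₀ (hnorm k)]
  obtain ⟨z, hz, ψ, hψ, hzlim⟩ := (isCompact_sphere (0 : V3) 1).tendsto_subseq hwmem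
  have hzne : z ≠ 0 := by
    have h1 : ‖z‖ = 1 := mem_sphere_zero_iff_norm.1 hz
    intro h0; rw [h0] at h1; simp at h1
  have hwne : ∀ k, w k ≠ 0 := by
    intro k
    have h1 : ‖w k‖ = 1 := mem_sphere_zero_iff_norm.1 (hwmem k)
    intro h0; rw [h0] at h1; simp at h1
  have hwcl : ∀ k, RP2.mk (w k) (hwne k) = u k := by
    intro k
    rw [← ha k]
    exact (RP2.mk_eq_mk_iff.2 ⟨‖(a k).1‖⁻¹, inv_ne_zero (hnorm k), by simp only [hwdef]⟩).symm
  have h1 : Tendsto (fun k => RP2.mk (w (ψ k)) (hwne (ψ k))) atTop (𝓝 (RP2.mk z hzne)) :=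
    tendsto_mk (fun k => hwne (ψ k)) hzne hzlim
  have h2 : Tendsto (fun k => u (ψ k)) atTop (𝓝 (RP2.mk f hf)) :=
    hu.comp hψ.tendsto_atTop
  have h3 : RP2.mk z hzne = RP2.mk f hf :=
    tendsto_nhds_unique (h1.congr fun k => hwcl (ψ k)) h2
  obtain ⟨c, hc, hcf⟩ := RP2.mk_eq_mk_iff.1 h3
  refine ⟨ψ, hψ, fun k => ⟨c • w (ψ k), smul_ne_zero hc (hwne (ψ k))⟩, ?_, ?_⟩
  · intro k
    rw [← hwcl (ψ k)]
    exact (RP2.mk_eq_mk_iff.2 ⟨c, hc, rfl⟩).symm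
  · rw [hcf]
    exact hzlim.const_smul c

end AuxLemmas



/-- Lemma 2.12 (balanced dynamics on the dual projective plane, diagonal case).
A class `[f₁ : f₂ : f₃]*` of linear forms is recorded through its coefficient vector,
and `g` acts on it by `g · [f] = [f ∘ g⁻¹]`, i.e. through `dualGL g`. -/
theorem balanced_dual_dynamics
    (β γ : ℕ → ℝ) (hpos : ∀ n, 0 < γ n ∧ γ n ≤ β n ∧ β n ≤ 1)
    (hβ : Filter.Tendsto β Filter.atTop (nhds 0))
    (hratio : Filter.Tendsto (fun n => γ n / β n) Filter.atTop (nhds 0))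
    (A : ℕ → GL3)
    (hA : ∀ n, (A n : Matrix (Fin 3) (Fin 3) ℝ) = Matrix.diagonal ![1, β n, γ n]) :
    (∀ (f : V3) (hf : f ≠ 0), f 2 ≠ 0 →
      DynSet (fun n => RP2.mapMat (dualGL (A n))) (RP2.mk f hf) =
        {RP2.mk ![0, 0, 1] e3_ne}) ∧
    (∀ (f : V3) (hf : f ≠ 0), f 2 = 0 → ¬(f 1 = 0 ∧ f 2 = 0) →
      DynSet (fun n => RP2.mapMat (dualGL (A n))) (RP2.mk f hf) =
        {q : RP2 | ∀ (w : V3) (hw : w ≠ 0), q = RP2.mk w hw → w 0 = 0}) ∧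
    DynSet (fun n => RP2.mapMat (dualGL (A n))) (RP2.mk ![1, 0, 0] e1_ne) = Set.univ := by
  have hγpos : ∀ n, 0 < γ n := fun n => (hpos n).1
  have hβpos : ∀ n, 0 < β n := fun n => lt_of_lt_of_le (hγpos n) (hpos n).2.1
  have hγ0 : Tendsto γ atTop (𝓝 0) :=
    squeeze_zero (fun n => (hγpos n).le) (fun n => (hpos n).2.1) hβ
  have hdual : ∀ n, ((dualGL (A n) : GL3) : Matrix (Fin 3) (Fin 3) ℝ) =
      Matrix.diagonal ![1, (β n)⁻¹, (γ n)⁻¹] := by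
    intro n
    show (((A n)⁻¹ : GL3) : Matrix (Fin 3) (Fin 3) ℝ)ᵀ = _
    have h1 : ((A n : Matrix (Fin 3) (Fin 3) ℝ)) *
        Matrix.diagonal ![1, (β n)⁻¹, (γ n)⁻¹] = 1 := by
      rw [hA n, Matrix.diagonal_mul_diagonal]
      have hone : (fun i => ![1, β n, γ n] i * ![1, (β n)⁻¹, (γ n)⁻¹] i) =
          fun _ : Fin 3 => (1 : ℝ) := by
        funext i
        fin_cases i <;>
          simp [mul_inv_cancel₀ (hβpos n).ne', mul_inv_cancel₀ (hγpos n).ne']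
      rw [hone]
      exact Matrix.diagonal_one
    rw [Units.inv_eq_of_mul_eq_one_right h1, Matrix.diagonal_transpose]
  have hne : ∀ n (v : V3), v ≠ 0 → (![v 0, (β n)⁻¹ * v 1, (γ n)⁻¹ * v 2] : V3) ≠ 0 := by
    intro n v hv
    obtain ⟨i, hi⟩ : ∃ i, v i ≠ 0 := by simpa [Function.ne_iff] using hv
    fin_cases i
    · exact ne_zero_of_coord 0 (by simpa using hi)
    · exact ne_zero_of_coord 1
        (by simpa using mul_ne_zero (inv_ne_zero (hβpos n).ne') hi)
    · exact ne_zero_of_coord 2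
        (by simpa using mul_ne_zero (inv_ne_zero (hγpos n).ne') hi)
  have hact : ∀ n (v : V3) (hv : v ≠ 0),
      RP2.mapMat (dualGL (A n)) (RP2.mk v hv) =
        RP2.mk ![v 0, (β n)⁻¹ * v 1, (γ n)⁻¹ * v 2] (hne n v hv) := by
    intro n v hv
    rw [RP2.mapMat_mk]
    apply RP2.mk_eq_of_eq
    rw [hdual n]
    funext i
    rw [Matrix.mulVec_diagonal]
    fin_cases i <;> simp
  have hact' : ∀ n (v : V3) (hv : v ≠ 0) (w : V3) (hw : w ≠ 0) (c : ℝ), c ≠ 0 →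
      w = c • ![v 0, (β n)⁻¹ * v 1, (γ n)⁻¹ * v 2] →
      RP2.mapMat (dualGL (A n)) (RP2.mk v hv) = RP2.mk w hw := by
    intro n v hv w hw c hc h
    rw [hact n v hv]
    exact RP2.mk_eq_mk_iff.2 ⟨c, hc, h⟩
  refine ⟨?_, ?_, ?_⟩
  · -- Part 1 : f 2 ≠ 0
    intro f hf hf2
    have hL : (![0, 0, f 2] : V3) ≠ 0 := ne_zero_of_coord 2 (by simpa using hf2)
    have hLe3 : RP2.mk ![0, 0, f 2] hL = RP2.mk ![0, 0, 1] e3_ne := by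
      refine RP2.mk_eq_mk_iff.2 ⟨(f 2)⁻¹, inv_ne_zero hf2, ?_⟩
      funext i
      fin_cases i <;> simp [inv_mul_cancel₀ hf2]
    rw [Set.eq_singleton_iff_unique_mem]
    constructor
    · -- membership
      set bb : ℕ → V3 := fun k => ![γ k * f 0, γ k / β k * f 1, f 2] with hbb
      have hbne : ∀ k, bb k ≠ 0 := fun k => ne_zero_of_coord 2 (by simp [hbb, hf2])
      have heq : ∀ k, RP2.mapMat (dualGL (A k)) (RP2.mk f hf) = RP2.mk (bb k) (hbne k) := by
        intro k
        refine hact' k f hf (bb k) (hbne k) (γ k) (hγpos k).ne' ?_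
        have hβ' := (hβpos k).ne'
        have hγ' := (hγpos k).ne'
        funext i
        fin_cases i <;> simp [hbb] <;> field_simp <;> ring
      have hlim : Tendsto bb atTop (𝓝 ![0, 0, f 2]) := by
        refine tendsto_pi_nhds.2 fun i => ?_
        fin_cases i
        · simpa [hbb] using hγ0.mul_const (f 0)
        · simpa [hbb] using hratio.mul_const (f 1)
        · simp [hbb]
      refine ⟨id, strictMono_id, fun _ => RP2.mk f hf, tendsto_const_nhds, ?_⟩
      have h1 := tendsto_mk hbne hL hlim
      rw [hLe3] at h1
      exact h1.congr fun k => (heq k).symm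
    · -- uniqueness
      rintro y ⟨φ, hφ, u, hu, hy⟩
      obtain ⟨ψ, hψ, v, hvcl, hvlim⟩ := exists_lift hu
      set m : ℕ → ℕ := fun k => φ (ψ k) with hm
      have hmm : StrictMono m := hφ.comp hψ
      set bb : ℕ → V3 := fun k =>
        ![γ (m k) * (v k).1 0, γ (m k) / β (m k) * (v k).1 1, (v k).1 2] with hbb
      have hsm : ∀ k, bb k = γ (m k) •
          ![(v k).1 0, (β (m k))⁻¹ * (v k).1 1, (γ (m k))⁻¹ * (v k).1 2] := by
        intro k
        have hβ' := (hβpos (m k)).ne'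
        have hγ' := (hγpos (m k)).ne'
        funext i
        fin_cases i <;> simp [hbb] <;> field_simp <;> ring
      have hbne : ∀ k, bb k ≠ 0 := fun k =>
        (hsm k) ▸ smul_ne_zero (hγpos (m k)).ne' (hne (m k) (v k).1 (v k).2)
      have heq : ∀ k, RP2.mapMat (dualGL (A (m k))) (u (ψ k)) = RP2.mk (bb k) (hbne k) := by
        intro k
        rw [← hvcl k]
        exact hact' (m k) (v k).1 (v k).2 (bb k) (hbne k) (γ (m k))
          (hγpos (m k)).ne' (hsm k)
      have hvv := tendsto_pi_nhds.1 hvlim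
      have hlim : Tendsto bb atTop (𝓝 ![0, 0, f 2]) := by
        refine tendsto_pi_nhds.2 fun i => ?_
        fin_cases i
        · simpa [hbb] using (hγ0.comp hmm.tendsto_atTop).mul (hvv 0)
        · simpa [hbb] using (hratio.comp hmm.tendsto_atTop).mul (hvv 1)
        · simpa [hbb] using hvv 2
      have h1 : Tendsto (fun k => RP2.mk (bb k) (hbne k)) atTop
          (𝓝 (RP2.mk ![0, 0, f 2] hL)) := tendsto_mk hbne hL hlim
      have h2 : Tendsto (fun k => RP2.mapMat (dualGL (A (m k))) (u (ψ k))) atTop (𝓝 y) :=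
        hy.comp hψ.tendsto_atTop
      have h3 := tendsto_nhds_unique h2 (h1.congr fun k => (heq k).symm)
      rw [h3, hLe3]
  · -- Part 2 : f 2 = 0, f 1 ≠ 0
    intro f hf hf2 hne12
    have hf1 : f 1 ≠ 0 := fun h => hne12 ⟨h, hf2⟩
    ext q
    simp only [Set.mem_setOf_eq]
    constructor
    · rintro ⟨φ, hφ, u, hu, hy⟩ w hw hq
      rw [hq] at hy
      obtain ⟨ψ, hψ, v, hvcl, hvlim⟩ := exists_lift hu
      set m : ℕ → ℕ := fun k => φ (ψ k) with hm
      have hmm : StrictMono m := hφ.comp hψ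
      set bb : ℕ → V3 := fun k =>
        ![β (m k) * (v k).1 0, (v k).1 1, β (m k) / γ (m k) * (v k).1 2] with hbb
      have hsm : ∀ k, bb k = β (m k) •
          ![(v k).1 0, (β (m k))⁻¹ * (v k).1 1, (γ (m k))⁻¹ * (v k).1 2] := by
        intro k
        have hβ' := (hβpos (m k)).ne'
        have hγ' := (hγpos (m k)).ne'
        funext i
        fin_cases i <;> simp [hbb] <;> field_simp <;> ring
      have hbne : ∀ k, bb k ≠ 0 := fun k =>
        (hsm k) ▸ smul_ne_zero (hβpos (m k)).ne' (hne (m k) (v k).1 (v k).2)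
      have heq : ∀ k, RP2.mapMat (dualGL (A (m k))) (u (ψ k)) = RP2.mk (bb k) (hbne k) := by
        intro k
        rw [← hvcl k]
        exact hact' (m k) (v k).1 (v k).2 (bb k) (hbne k) (β (m k))
          (hβpos (m k)).ne' (hsm k)
      have h2 : Tendsto (fun k => RP2.mk (bb k) (hbne k)) atTop (𝓝 (RP2.mk w hw)) :=
        (hy.comp hψ.tendsto_atTop).congr fun k => heq k
      obtain ⟨ψ₂, hψ₂, c, hccl, hclim⟩ := exists_lift h2
      have hts : ∀ k, ∃ t : ℝ, t ≠ 0 ∧ (c k).1 = t • bb (ψ₂ k) :=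
        fun k => RP2.mk_eq_mk_iff.1 (hccl k).symm
      choose t ht htc using hts
      have hcc := tendsto_pi_nhds.1 hclim
      have hvv := tendsto_pi_nhds.1 (hvlim.comp hψ₂.tendsto_atTop)
      have hmm2 : StrictMono fun k => m (ψ₂ k) := hmm.comp hψ₂
      have hco1 : Tendsto (fun k => t k * (v (ψ₂ k)).1 1) atTop (𝓝 (w 1)) := by
        refine (hcc 1).congr fun k => ?_
        rw [htc k]
        simp [hbb]
      have htt : Tendsto t atTop (𝓝 (w 1 / f 1)) := by
        have hden : Tendsto (fun k => (v (ψ₂ k)).1 1) atTop (𝓝 (f 1)) := hvv 1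
        refine (hco1.div hden hf1).congr' ?_
        filter_upwards [hden.eventually_ne hf1] with k hk
        rw [Pi.div_apply]
        field_simp
      have hco0 : Tendsto (fun k => t k * (β (m (ψ₂ k)) * (v (ψ₂ k)).1 0)) atTop
          (𝓝 (w 0)) := by
        refine (hcc 0).congr fun k => ?_
        rw [htc k]
        simp [hbb]
      have hzero : Tendsto (fun k => t k * (β (m (ψ₂ k)) * (v (ψ₂ k)).1 0)) atTop
          (𝓝 (w 1 / f 1 * (0 * f 0))) :=
        htt.mul ((hβ.comp hmm2.tendsto_atTop).mul (hvv 0))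
      have h4 := tendsto_nhds_unique hco0 hzero
      rw [h4]; ring
    · intro hq
      obtain ⟨w', hw'⟩ := Quotient.exists_rep q
      have hqw : q = RP2.mk w'.1 w'.2 := hw'.symm
      have hw0 : w'.1 0 = 0 := hq w'.1 w'.2 hqw
      by_cases hw1 : w'.1 1 = 0
      · -- q = [0 : 0 : 1]
        have hw2 : w'.1 2 ≠ 0 := by
          intro h2
          apply w'.2
          funext i
          fin_cases i <;> simp [hw0, hw1, h2]
        have hqe3 : q = RP2.mk ![0, 0, 1] e3_ne := by
          rw [hqw]
          refine (RP2.mk_eq_mk_iff.2 ⟨w'.1 2, hw2, ?_⟩).symm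
          funext i
          fin_cases i <;> simp [hw0, hw1]
        set ε : ℕ → ℝ := fun k => Real.sqrt (γ k / β k) with hεdef
        have hεpos : ∀ k, 0 < ε k :=
          fun k => Real.sqrt_pos.2 (div_pos (hγpos k) (hβpos k))
        have hεsq : ∀ k, ε k * ε k = γ k / β k :=
          fun k => Real.mul_self_sqrt (div_pos (hγpos k) (hβpos k)).le
        have hβε : ∀ k, β k * (ε k * ε k) = γ k := by
          intro k
          rw [hεsq k, mul_comm, div_mul_cancel₀ _ (hβpos k).ne']
        have hkey : ∀ k, γ k / ε k = β k * ε k := by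
          intro k
          rw [div_eq_iff (hεpos k).ne']
          linear_combination -(hβε k)
        have hε0 : Tendsto ε atTop (𝓝 0) := by
          have h := (Real.continuous_sqrt.tendsto 0).comp hratio
          rw [Real.sqrt_zero] at h
          exact h
        set uu : ℕ → V3 := fun k => ![f 0, f 1, ε k] with huu
        have huune : ∀ k, uu k ≠ 0 := fun k => ne_zero_of_coord 1 (by simpa [huu] using hf1)
        have huulim : Tendsto (fun k => uu k) atTop (𝓝 f) := by
          refine tendsto_pi_nhds.2 fun i => ?_
          fin_cases i
          · simp [huu]
          · simp [huu]
          · simpa [huu, hf2] using hε0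
        set bb : ℕ → V3 := fun k => ![β k * ε k * f 0, ε k * f 1, 1] with hbb
        have hbne : ∀ k, bb k ≠ 0 := fun k => ne_zero_of_coord 2 (by simp [hbb])
        have hsm : ∀ k, bb k = (γ k / ε k) •
            ![uu k 0, (β k)⁻¹ * uu k 1, (γ k)⁻¹ * uu k 2] := by
          intro k
          funext i
          fin_cases i
          · simp [hbb, huu, hkey k]
          · show ε k * f 1 = γ k / ε k * ((β k)⁻¹ * f 1)
            rw [hkey k]
            rw [mul_comm (β k) (ε k), mul_assoc, ← mul_assoc (β k), mul_inv_cancel₀ (hβpos k).ne',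
              one_mul]
          · show (1 : ℝ) = γ k / ε k * ((γ k)⁻¹ * ε k)
            rw [div_mul_eq_mul_div, mul_comm]
            field_simp [(hγpos k).ne', (hεpos k).ne']
        have heq : ∀ k, RP2.mapMat (dualGL (A k)) (RP2.mk (uu k) (huune k)) =
            RP2.mk (bb k) (hbne k) :=
          fun k => hact' k (uu k) (huune k) (bb k) (hbne k) (γ k / ε k)
            (div_ne_zero (hγpos k).ne' (hεpos k).ne') (hsm k)
        have hblim : Tendsto bb atTop (𝓝 ![0, 0, 1]) := by
          refine tendsto_pi_nhds.2 fun i => ?_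
          fin_cases i
          · simpa [hbb] using (hβ.mul hε0).mul_const (f 0)
          · simpa [hbb] using hε0.mul_const (f 1)
          · simp [hbb]
        refine ⟨id, strictMono_id, fun k => RP2.mk (uu k) (huune k),
          tendsto_mk huune hf huulim, ?_⟩
        have h1 := tendsto_mk hbne e3_ne hblim
        rw [← hqe3] at h1
        exact h1.congr fun k => (heq k).symm
      · -- w 1 ≠ 0
        set r : ℝ := w'.1 2 / w'.1 1 with hr
        set uu : ℕ → V3 := fun k => ![f 0, f 1, γ k / β k * (r * f 1)] with huu
        have huune : ∀ k, uu k ≠ 0 := fun k => ne_zero_of_coord 1 (by simpa [huu] using hf1)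
        have huulim : Tendsto (fun k => uu k) atTop (𝓝 f) := by
          refine tendsto_pi_nhds.2 fun i => ?_
          fin_cases i
          · simp [huu]
          · simp [huu]
          · simpa [huu, hf2] using hratio.mul_const (r * f 1)
        set bb : ℕ → V3 := fun k => ![β k * f 0, f 1, r * f 1] with hbb
        have hbne : ∀ k, bb k ≠ 0 := fun k => ne_zero_of_coord 1 (by simpa [hbb] using hf1)
        have hsm : ∀ k, bb k = β k •
            ![uu k 0, (β k)⁻¹ * uu k 1, (γ k)⁻¹ * uu k 2] := by
          intro k
          funext i
          fin_cases i
          · simp [hbb, huu]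
          · simp [hbb, huu, ← mul_assoc, mul_inv_cancel₀ (hβpos k).ne']
          · show r * f 1 = β k * ((γ k)⁻¹ * (γ k / β k * (r * f 1)))
            field_simp [(hγpos k).ne', (hβpos k).ne']
            try ring
        have heq : ∀ k, RP2.mapMat (dualGL (A k)) (RP2.mk (uu k) (huune k)) =
            RP2.mk (bb k) (hbne k) :=
          fun k => hact' k (uu k) (huune k) (bb k) (hbne k) (β k)
            (hβpos k).ne' (hsm k)
        have hLne : (![0, f 1, r * f 1] : V3) ≠ 0 :=
          ne_zero_of_coord 1 (by simpa using hf1)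
        have hblim : Tendsto bb atTop (𝓝 ![0, f 1, r * f 1]) := by
          refine tendsto_pi_nhds.2 fun i => ?_
          fin_cases i
          · simpa [hbb] using hβ.mul_const (f 0)
          · simp [hbb]
          · simp [hbb]
        have hqL : q = RP2.mk ![0, f 1, r * f 1] hLne := by
          rw [hqw]
          refine (RP2.mk_eq_mk_iff.2 ⟨w'.1 1 / f 1, div_ne_zero hw1 hf1, ?_⟩).symm
          funext i
          fin_cases i
          · show w'.1 0 = w'.1 1 / f 1 * 0
            simp [hw0]
          · show w'.1 1 = w'.1 1 / f 1 * f 1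
            rw [div_mul_cancel₀ _ hf1]
          · show w'.1 2 = w'.1 1 / f 1 * (r * f 1)
            rw [hr]
            field_simp [hw1, hf1]
            try ring
        refine ⟨id, strictMono_id, fun k => RP2.mk (uu k) (huune k),
          tendsto_mk huune hf huulim, ?_⟩
        have h1 := tendsto_mk hbne hLne hblim
        rw [← hqL] at h1
        exact h1.congr fun k => (heq k).symm
  · -- Part 3 : f = e1
    rw [Set.eq_univ_iff_forall]
    intro q
    obtain ⟨w', hw'⟩ := Quotient.exists_rep q
    have hqw : q = RP2.mk w'.1 w'.2 := hw'.symm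
    by_cases hw0 : w'.1 0 = 0
    · set δ : ℕ → ℝ := fun k => Real.sqrt (β k) with hδdef
      have hδpos : ∀ k, 0 < δ k := fun k => Real.sqrt_pos.2 (hβpos k)
      have hδsq : ∀ k, δ k * δ k = β k := fun k => Real.mul_self_sqrt (hβpos k).le
      have hδ0 : Tendsto δ atTop (𝓝 0) := by
        have h := (Real.continuous_sqrt.tendsto 0).comp hβ
        rw [Real.sqrt_zero] at h
        exact h
      have hγδ : Tendsto (fun k => γ k / δ k) atTop (𝓝 0) := by
        refine squeeze_zero (fun k => (div_pos (hγpos k) (hδpos k)).le) (fun k => ?_) hδ0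
        calc γ k / δ k ≤ β k / δ k := by
              gcongr
              exact (hpos k).2.1
          _ = δ k := by rw [div_eq_iff (hδpos k).ne']; exact (hδsq k).symm
      set uu : ℕ → V3 := fun k => ![δ k, β k * w'.1 1, γ k * w'.1 2] with huu
      have huune : ∀ k, uu k ≠ 0 :=
        fun k => ne_zero_of_coord 0 (by simpa [huu] using (hδpos k).ne')
      set cc : ℕ → V3 := fun k => ![1, δ k * w'.1 1, γ k / δ k * w'.1 2] with hcc
      have hccne : ∀ k, cc k ≠ 0 := fun k => ne_zero_of_coord 0 (by simp [hcc])
      have hscl : ∀ k, cc k = (δ k)⁻¹ • uu k := by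
        intro k
        funext i
        fin_cases i
        · simp [hcc, huu, inv_mul_cancel₀ (hδpos k).ne']
        · show δ k * w'.1 1 = (δ k)⁻¹ * (β k * w'.1 1)
          rw [← hδsq k]
          field_simp [(hδpos k).ne']
          try ring
        · show γ k / δ k * w'.1 2 = (δ k)⁻¹ * (γ k * w'.1 2)
          field_simp [(hδpos k).ne']
          try ring
      have hucl : ∀ k, RP2.mk (uu k) (huune k) = RP2.mk (cc k) (hccne k) :=
        fun k => RP2.mk_eq_mk_iff.2 ⟨(δ k)⁻¹, inv_ne_zero (hδpos k).ne', hscl k⟩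
      have hcclim : Tendsto cc atTop (𝓝 ![1, 0, 0]) := by
        refine tendsto_pi_nhds.2 fun i => ?_
        fin_cases i
        · simp [hcc]
        · simpa [hcc] using hδ0.mul_const (w'.1 1)
        · simpa [hcc] using hγδ.mul_const (w'.1 2)
      have hulim : Tendsto (fun k => RP2.mk (uu k) (huune k)) atTop
          (𝓝 (RP2.mk ![1, 0, 0] e1_ne)) :=
        (tendsto_mk hccne e1_ne hcclim).congr fun k => (hucl k).symm
      set bb : ℕ → V3 := fun k => ![δ k, w'.1 1, w'.1 2] with hbb
      have hbne : ∀ k, bb k ≠ 0 :=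
        fun k => ne_zero_of_coord 0 (by simpa [hbb] using (hδpos k).ne')
      have hsm : ∀ k, bb k = (1 : ℝ) •
          ![uu k 0, (β k)⁻¹ * uu k 1, (γ k)⁻¹ * uu k 2] := by
        intro k
        rw [one_smul]
        funext i
        fin_cases i
        · simp [hbb, huu]
        · simp [hbb, huu, ← mul_assoc, inv_mul_cancel₀ (hβpos k).ne']
        · simp [hbb, huu, ← mul_assoc, inv_mul_cancel₀ (hγpos k).ne']
      have heq : ∀ k, RP2.mapMat (dualGL (A k)) (RP2.mk (uu k) (huune k)) =
          RP2.mk (bb k) (hbne k) :=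
        fun k => hact' k (uu k) (huune k) (bb k) (hbne k) 1 one_ne_zero (hsm k)
      have hblim : Tendsto bb atTop (𝓝 w'.1) := by
        refine tendsto_pi_nhds.2 fun i => ?_
        fin_cases i
        · simpa [hbb, hw0] using hδ0
        · simp [hbb]
        · simp [hbb]
      refine ⟨id, strictMono_id, fun k => RP2.mk (uu k) (huune k), hulim, ?_⟩
      have h1 := tendsto_mk hbne w'.2 hblim
      rw [← hqw] at h1
      exact h1.congr fun k => (heq k).symm
    · set uu : ℕ → V3 := fun k => ![w'.1 0, β k * w'.1 1, γ k * w'.1 2] with huu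
      have huune : ∀ k, uu k ≠ 0 := fun k => ne_zero_of_coord 0 (by simpa [huu] using hw0)
      have hW : (![w'.1 0, 0, 0] : V3) ≠ 0 := ne_zero_of_coord 0 (by simpa using hw0)
      have hWe1 : RP2.mk ![w'.1 0, 0, 0] hW = RP2.mk ![1, 0, 0] e1_ne := by
        refine RP2.mk_eq_mk_iff.2 ⟨(w'.1 0)⁻¹, inv_ne_zero hw0, ?_⟩
        funext i
        fin_cases i <;> simp [inv_mul_cancel₀ hw0]
      have huulim : Tendsto uu atTop (𝓝 ![w'.1 0, 0, 0]) := by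
        refine tendsto_pi_nhds.2 fun i => ?_
        fin_cases i
        · simp [huu]
        · simpa [huu] using hβ.mul_const (w'.1 1)
        · simpa [huu] using hγ0.mul_const (w'.1 2)
      have hulim : Tendsto (fun k => RP2.mk (uu k) (huune k)) atTop
          (𝓝 (RP2.mk ![1, 0, 0] e1_ne)) := by
        have h1 := tendsto_mk huune hW huulim
        rwa [hWe1] at h1
      have hsm : ∀ k, w'.1 = (1 : ℝ) •
          ![uu k 0, (β k)⁻¹ * uu k 1, (γ k)⁻¹ * uu k 2] := by
        intro k
        rw [one_smul]
        funext i
        fin_cases i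
        · simp [huu]
        · simp [huu, ← mul_assoc, inv_mul_cancel₀ (hβpos k).ne']
        · simp [huu, ← mul_assoc, inv_mul_cancel₀ (hγpos k).ne']
      have heq : ∀ k, RP2.mapMat (dualGL (A k)) (RP2.mk (uu k) (huune k)) =
          RP2.mk w'.1 w'.2 :=
        fun k => hact' k (uu k) (huune k) w'.1 w'.2 1 one_ne_zero (hsm k)
      refine ⟨id, strictMono_id, fun k => RP2.mk (uu k) (huune k), hulim, ?_⟩
      rw [hqw]
      exact tendsto_const_nhds.congr fun k => (heq k).symm
end

section
/- Simply transitive action of SL(2,ℝ) on the open orbit in the flag space (Lemma 4.2(1)): Let j : SL(2,ℝ) → GL(3,ℝ) be the embedding sending A to the block-diagonal matrix with blocks A and 1. Let Y = {([v],[f]) ∈ X : v ∉ span(e₁,e₂) and f(e₃) ≠ 0} ⊆ X, and let o' = ([(1,0,1)], [f₀]) ∈ X, where f₀ is the linear form f₀(x,y,z) = x − z. Then the map A ↦ j(A)·o' is a bijection from SL(2,ℝ) onto Y; in particular, Y is invariant under j(SL(2,ℝ)) and j(SL(2,ℝ)) acts simply transitively on Y. -/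
open Matrix Filter Topology Set

/-- The embedding `j : SL(2,ℝ) → GL(3,ℝ)`, at the level of matrices. -/
def jmat (B : Matrix (Fin 2) (Fin 2) ℝ) : Matrix (Fin 3) (Fin 3) ℝ :=
  !![B 0 0, B 0 1, 0; B 1 0, B 1 1, 0; 0, 0, 1]

lemma jmat_mul (B C : Matrix (Fin 2) (Fin 2) ℝ) : jmat B * jmat C = jmat (B * C) := by
  ext i j
  fin_cases i <;> fin_cases j <;>
    simp [jmat, Matrix.mul_apply, Fin.sum_univ_three, Fin.sum_univ_two]

lemma jmat_one : jmat 1 = 1 := by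
  ext i j
  fin_cases i <;> fin_cases j <;>
    simp [jmat, Matrix.one_apply, Matrix.vecHead, Matrix.vecTail]

/-- `SL(2,ℝ)`. -/
abbrev SL2 : Type := Matrix.SpecialLinearGroup (Fin 2) ℝ

/-- The embedding `j : SL(2,ℝ) → GL(3,ℝ)`. -/
def jGL (B : SL2) : GL3 where
  val := jmat B
  inv := jmat ((B⁻¹ : SL2) : Matrix (Fin 2) (Fin 2) ℝ)
  val_inv := by
    rw [jmat_mul, ← Matrix.SpecialLinearGroup.coe_mul, mul_inv_cancel,
      Matrix.SpecialLinearGroup.coe_one, jmat_one]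
  inv_val := by
    rw [jmat_mul, ← Matrix.SpecialLinearGroup.coe_mul, inv_mul_cancel,
      Matrix.SpecialLinearGroup.coe_one, jmat_one]

/-- The base flag `o' = ([(1,0,1)], [f₀])` with `f₀(x,y,z) = x - z`. -/
def oFlag : Flag3 :=
  ⟨(RP2.mk ![1, 0, 1] (ne_zero_of_coord 0 (by norm_num)),
    RP2.mk ![1, 0, -1] (ne_zero_of_coord 0 (by norm_num))),
   mem_flagSpace_mk _ _ (by simp [dotProduct, Fin.sum_univ_three])⟩

/-- The open orbit `Y = {([v],[f]) ∈ X : v ∉ span(e₁,e₂), f(e₃) ≠ 0}`. -/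
def Yset : Set Flag3 :=
  {x | (∀ (v : V3) (hv : v ≠ 0), (x : RP2 × RP2).1 = RP2.mk v hv → v 2 ≠ 0) ∧
       (∀ (f : V3) (hf : f ≠ 0), (x : RP2 × RP2).2 = RP2.mk f hf → f 2 ≠ 0)}

lemma jGL_mul (B C : SL2) : jGL (B * C) = jGL B * jGL C := by
  apply Units.ext
  show jmat ((B * C : SL2) : Matrix (Fin 2) (Fin 2) ℝ) = jmat B * jmat C
  rw [jmat_mul, Matrix.SpecialLinearGroup.coe_mul]

def ptVec (a c : ℝ) : V3 := ![a, c, 1]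
def fmVec (d b : ℝ) : V3 := ![d, -b, -1]

lemma ptVec_ne (a c : ℝ) : ptVec a c ≠ 0 := ne_zero_of_coord 2 (by simp [ptVec])
lemma fmVec_ne (d b : ℝ) : fmVec d b ≠ 0 := ne_zero_of_coord 2 (by simp [fmVec])

lemma fm_dot_pt (a b c d : ℝ) : fmVec d b ⬝ᵥ ptVec a c = d * a - b * c - 1 := by
  simp [fmVec, ptVec, dotProduct, Fin.sum_univ_three]; ring

/-- The flag `([a : c : 1], [d : -b : -1])` associated to `B = !![a,b;c,d] ∈ SL(2,ℝ)`. -/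
def flagOf (B : SL2) : Flag3 :=
  ⟨(RP2.mk (ptVec ((B : Matrix (Fin 2) (Fin 2) ℝ) 0 0) ((B : Matrix (Fin 2) (Fin 2) ℝ) 1 0))
      (ptVec_ne _ _),
    RP2.mk (fmVec ((B : Matrix (Fin 2) (Fin 2) ℝ) 1 1) ((B : Matrix (Fin 2) (Fin 2) ℝ) 0 1))
      (fmVec_ne _ _)),
   mem_flagSpace_mk _ _ (by
     rw [fm_dot_pt]
     have h : (B : Matrix (Fin 2) (Fin 2) ℝ).det = 1 := B.2
     rw [Matrix.det_fin_two] at h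
     linarith)⟩

lemma flagMap_oFlag (B : SL2) : flagMap (jGL B) oFlag = flagOf B := by
  apply Subtype.ext
  apply Prod.ext
  · show RP2.mapMat (jGL B) (RP2.mk ![1,0,1] _) = _
    rw [RP2.mapMat_mk]
    apply RP2.mk_eq_mk_iff.2
    refine ⟨1, one_ne_zero, ?_⟩
    rw [one_smul]
    show ptVec _ _ = jmat (B : Matrix (Fin 2) (Fin 2) ℝ) *ᵥ ![1,0,1]
    funext i
    fin_cases i <;> simp [ptVec, jmat, Matrix.mulVec, dotProduct, Fin.sum_univ_three]
  · show RP2.mapMat (dualGL (jGL B)) (RP2.mk ![1,0,-1] _) = _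
    rw [RP2.mapMat_mk]
    apply RP2.mk_eq_mk_iff.2
    refine ⟨1, one_ne_zero, ?_⟩
    rw [one_smul]
    show fmVec _ _ = ((dualGL (jGL B) : GL3) : Matrix (Fin 3) (Fin 3) ℝ) *ᵥ ![1,0,-1]
    have : ((dualGL (jGL B) : GL3) : Matrix (Fin 3) (Fin 3) ℝ)
        = (jmat ((B⁻¹ : SL2) : Matrix (Fin 2) (Fin 2) ℝ))ᵀ := rfl
    rw [this, Matrix.SpecialLinearGroup.coe_inv, Matrix.adjugate_fin_two]
    funext i
    fin_cases i <;> simp [fmVec, jmat, Matrix.mulVec, dotProduct, Fin.sum_univ_three]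

lemma ptVec_eq_iff {a c a' c' : ℝ} (h : RP2.mk (ptVec a c) (ptVec_ne a c)
    = RP2.mk (ptVec a' c') (ptVec_ne a' c')) : a = a' ∧ c = c' := by
  obtain ⟨k, hk, hkv⟩ := RP2.mk_eq_mk_iff.1 h
  have h2 := congrFun hkv 2
  simp [ptVec] at h2
  have h0 := congrFun hkv 0
  have h1 := congrFun hkv 1
  simp [ptVec, ← h2] at h0 h1
  exact ⟨h0.symm, h1.symm⟩

lemma fmVec_eq_iff {d b d' b' : ℝ} (h : RP2.mk (fmVec d b) (fmVec_ne d b)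
    = RP2.mk (fmVec d' b') (fmVec_ne d' b')) : d = d' ∧ b = b' := by
  obtain ⟨k, hk, hkv⟩ := RP2.mk_eq_mk_iff.1 h
  have hk1 : k = 1 := by
    have h2 := congrFun hkv 2
    simp [fmVec] at h2
    linarith
  subst hk1
  have h0 := congrFun hkv 0
  have h1 := congrFun hkv 1
  simp [fmVec] at h0 h1
  exact ⟨h0.symm, h1.symm⟩

lemma flagOf_injective : Function.Injective flagOf := by
  intro B C h
  have h1 : (flagOf B).1.1 = (flagOf C).1.1 := by rw [h]
  have h2 : (flagOf B).1.2 = (flagOf C).1.2 := by rw [h]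
  obtain ⟨ha, hc⟩ := ptVec_eq_iff h1
  obtain ⟨hd, hb⟩ := fmVec_eq_iff h2
  apply Subtype.ext
  ext i j
  fin_cases i <;> fin_cases j <;> assumption

lemma flagOf_mem_Yset (B : SL2) : flagOf B ∈ Yset := by
  constructor
  · intro v hv hvx
    obtain ⟨k, hk, hkv⟩ := RP2.mk_eq_mk_iff.1 hvx
    have := congrFun hkv 2
    simp [ptVec] at this
    rw [this]
    simpa using hk
  · intro f hf hfx
    obtain ⟨k, hk, hkv⟩ := RP2.mk_eq_mk_iff.1 hfx
    have := congrFun hkv 2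
    simp [fmVec] at this
    rw [this]
    simpa using hk

lemma Yset_eq_flagOf {x : Flag3} (hx : x ∈ Yset) : ∃ B : SL2, flagOf B = x := by
  obtain ⟨⟨v, hv⟩, hp⟩ := Quotient.exists_rep x.1.1
  obtain ⟨⟨f, hf⟩, hq⟩ := Quotient.exists_rep x.1.2
  have hp' : x.1.1 = RP2.mk v hv := hp.symm
  have hq' : x.1.2 = RP2.mk f hf := hq.symm
  have hv2 : v 2 ≠ 0 := hx.1 v hv hp'
  have hf2 : f 2 ≠ 0 := hx.2 f hf hq'
  have hdot : f ⬝ᵥ v = 0 := x.2 v f hv hf hp' hq'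
  rw [dotProduct, Fin.sum_univ_three] at hdot
  have key : f 0 * v 0 + f 1 * v 1 = -(f 2 * v 2) := by linarith
  set a := (v 2)⁻¹ * v 0 with ha
  set c := (v 2)⁻¹ * v 1 with hc
  set d := -((f 2)⁻¹ * f 0) with hd
  set b := (f 2)⁻¹ * f 1 with hb
  have hdet : (!![a, b; c, d] : Matrix (Fin 2) (Fin 2) ℝ).det = 1 := by
    rw [Matrix.det_fin_two_of]
    calc a * d - b * c
        = -((v 2)⁻¹ * (f 2)⁻¹) * (f 0 * v 0 + f 1 * v 1) := by
          rw [ha, hb, hc, hd]; ring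
      _ = -((v 2)⁻¹ * (f 2)⁻¹) * (-(f 2 * v 2)) := by rw [key]
      _ = 1 := by field_simp
  refine ⟨⟨!![a, b; c, d], hdet⟩, ?_⟩
  apply Subtype.ext
  apply Prod.ext
  · show RP2.mk (ptVec _ _) _ = x.1.1
    rw [hp']
    apply RP2.mk_eq_mk_iff.2
    refine ⟨v 2, hv2, ?_⟩
    funext i
    fin_cases i <;> simp [ptVec, ha, hc] <;> field_simp
  · show RP2.mk (fmVec _ _) _ = x.1.2
    rw [hq']
    apply RP2.mk_eq_mk_iff.2
    refine ⟨-(f 2), neg_ne_zero.2 hf2, ?_⟩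
    funext i
    fin_cases i <;> simp [fmVec, hd, hb] <;> field_simp

/-- Lemma 4.2(1): `A ↦ j(A)·o'` is a bijection from `SL(2,ℝ)` onto `Y`; in
particular `Y` is `j(SL(2,ℝ))`-invariant and `j(SL(2,ℝ))` acts simply transitively
on `Y`. -/
theorem sl2_simply_transitive_on_open_orbit :
    Function.Injective (fun B : SL2 => flagMap (jGL B) oFlag) ∧
    Set.range (fun B : SL2 => flagMap (jGL B) oFlag) = Yset ∧
    (∀ (B : SL2), ∀ x ∈ Yset, flagMap (jGL B) x ∈ Yset) ∧
    (∀ x ∈ Yset, ∀ y ∈ Yset, ∃! B : SL2, flagMap (jGL B) x = y) := by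
  have hinj : Function.Injective (fun B : SL2 => flagMap (jGL B) oFlag) := by
    intro B C h
    simp only [flagMap_oFlag] at h
    exact flagOf_injective h
  have hrange : Set.range (fun B : SL2 => flagMap (jGL B) oFlag) = Yset := by
    ext x
    constructor
    · rintro ⟨B, rfl⟩
      simpa only [flagMap_oFlag] using flagOf_mem_Yset B
    · intro hx
      obtain ⟨B, hB⟩ := Yset_eq_flagOf hx
      exact ⟨B, by simp only [flagMap_oFlag, hB]⟩
  refine ⟨hinj, hrange, ?_, ?_⟩
  · intro B x hx
    rw [← hrange] at hx ⊢
    obtain ⟨C, rfl⟩ := hx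
    exact ⟨B * C, by simp only [jGL_mul, ← flagMap_flagMap]⟩
  · intro x hx y hy
    rw [← hrange] at hx hy
    obtain ⟨C, hC⟩ := hx
    obtain ⟨D, hD⟩ := hy
    simp only at hC hD
    refine ⟨D * C⁻¹, ?_, ?_⟩
    · show flagMap (jGL (D * C⁻¹)) x = y
      rw [← hC, ← hD, flagMap_flagMap, ← jGL_mul, mul_assoc, inv_mul_cancel, mul_one]
    · intro B hB
      have hB' : flagMap (jGL B) x = y := hB
      have h1 : flagMap (jGL (B * C)) oFlag = flagMap (jGL D) oFlag := by
        rw [jGL_mul, ← flagMap_flagMap, hC, hD]; exact hB' 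
      have h2 : B * C = D := hinj h1
      rw [← h2, mul_assoc, mul_inv_cancel, mul_one]
end
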